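/- (Flat case of the non-Abelian homotopy formula over a one-dimensional base.) Let A be a real unital Banach algebra, let ω₀, ω₁ : ℝ × ℝ → A be C¹, and let g : ℝ × ℝ → A be C² with g(x,0) = 1, every g(x,t) invertible, and ∂_t g(x,t) = −ω₁(x,t)·g(x,t) for all (x,t). Assume zero curvature: ∂_t ω₀(x,t) − ∂_x ω₁(x,t) + ω₁(x,t)·ω₀(x,t) − ω₀(x,t)·ω₁(x,t) = 0 for all (x,t). Then for every x, writing g₁ = g(x,1): ω₀(x,1) = g₁ · ω₀(x,0) · g₁⁻¹ − ∂_x g(x,1) · g₁⁻¹; that is, the restrictions of the flat form to t = 1 and t = 0 are gauge-equivalent via g₁. -/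

import Mathlib

open ContinuousLinearMap in
private lemma curve_snd {E : Type*} [NormedAddCommGroup E] [NormedSpace ℝ E]
    (F : ℝ × ℝ → E) (hF : Differentiable ℝ F) (a t : ℝ) :
    HasDerivAt (fun s => F (a, s)) (fderiv ℝ F (a, t) (0, 1)) t :=
  (hF (a, t)).hasFDerivAt.comp_hasDerivAt t
    (HasDerivAt.prodMk (hasDerivAt_const t a) (hasDerivAt_id t))

open ContinuousLinearMap in
private lemma curve_fst {E : Type*} [NormedAddCommGroup E] [NormedSpace ℝ E]
    (F : ℝ × ℝ → E) (hF : Differentiable ℝ F) (a t : ℝ) :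
    HasDerivAt (fun u => F (u, t)) (fderiv ℝ F (a, t) (1, 0)) a :=
  (hF (a, t)).hasFDerivAt.comp_hasDerivAt a
    (HasDerivAt.prodMk (hasDerivAt_id a) (hasDerivAt_const a t))

/-- **Flat case of the non-Abelian homotopy formula.**  If the curvature component
`∂_t ω₀ - ∂_x ω₁ + ω₁ ω₀ - ω₀ ω₁` vanishes identically, then the restrictions of the
form to `t = 1` and `t = 0` are gauge-equivalent via `g₁ = g(x,1)`:
`ω₀(x,1) = g₁ ω₀(x,0) g₁⁻¹ - ∂_x g(x,1) · g₁⁻¹`. -/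
theorem nonabelian_homotopy_flat
    {A : Type*} [NormedRing A] [NormedAlgebra ℝ A] [CompleteSpace A]
    (ω₀ ω₁ g : ℝ × ℝ → A)
    (hω₀ : ContDiff ℝ 1 ω₀) (hω₁ : ContDiff ℝ 1 ω₁) (hg : ContDiff ℝ 2 g)
    (hg0 : ∀ x : ℝ, g (x, 0) = 1)
    (hgu : ∀ p : ℝ × ℝ, IsUnit (g p))
    (hgt : ∀ x t : ℝ, deriv (fun s => g (x, s)) t = -(ω₁ (x, t)) * g (x, t))
    (hflat : ∀ x t : ℝ,
      deriv (fun s => ω₀ (x, s)) t - deriv (fun u => ω₁ (u, t)) x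
        + ω₁ (x, t) * ω₀ (x, t) - ω₀ (x, t) * ω₁ (x, t) = 0) :
    ∀ x : ℝ,
      ω₀ (x, 1) = g (x, 1) * ω₀ (x, 0) * Ring.inverse (g (x, 1))
        - deriv (fun u => g (u, 1)) x * Ring.inverse (g (x, 1)) := by
  intro x
  have hgd : Differentiable ℝ g := hg.differentiable (by norm_num)
  have hω₀d : Differentiable ℝ ω₀ := hω₀.differentiable one_ne_zero
  have hω₁d : Differentiable ℝ ω₁ := hω₁.differentiable one_ne_zero
  have hfd : Differentiable ℝ (fderiv ℝ g) :=
    (hg.fderiv_right (m := 1) (by norm_num)).differentiable one_ne_zero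
  -- partial_t g = -ω₁ g as fderiv value
  have hgt' : ∀ a t : ℝ, fderiv ℝ g (a, t) (0, 1) = -(ω₁ (a, t)) * g (a, t) := fun a t =>
    ((curve_snd g hgd a t).deriv).symm.trans (hgt a t)
  -- w t = ∂_x g (x,t)
  set w : ℝ → A := fun t => fderiv ℝ g (x, t) (1, 0) with hw
  have hw_eq : ∀ t, deriv (fun u => g (u, t)) x = w t := fun t => (curve_fst g hgd x t).deriv
  -- derivative of w in t
  have hwd : ∀ t : ℝ, HasDerivAt w
      (-(deriv (fun u => ω₁ (u, t)) x) * g (x, t) + -(ω₁ (x, t)) * w t) t := by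
    intro t
    have h1 : HasDerivAt (fun s => fderiv ℝ g (x, s))
        (fderiv ℝ (fderiv ℝ g) (x, t) (0, 1)) t := curve_snd _ hfd x t
    have h1' : HasDerivAt w (fderiv ℝ (fderiv ℝ g) (x, t) (0, 1) (1, 0)) t := by
      have := (ContinuousLinearMap.apply ℝ A ((1, 0) : ℝ × ℝ)).hasFDerivAt.comp_hasDerivAt t h1
      exact this
    -- symmetry of second derivative
    have hsym : fderiv ℝ (fderiv ℝ g) (x, t) (0, 1) (1, 0)
        = fderiv ℝ (fderiv ℝ g) (x, t) (1, 0) (0, 1) :=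
      second_derivative_symmetric (fun y => (hgd y).hasFDerivAt)
        (hfd (x, t)).hasFDerivAt _ _
    -- the other mixed partial
    have h2 : HasDerivAt (fun u => fderiv ℝ g (u, t) (0, 1))
        (fderiv ℝ (fderiv ℝ g) (x, t) (1, 0) (0, 1)) x := by
      have h2' : HasDerivAt (fun u => fderiv ℝ g (u, t))
          (fderiv ℝ (fderiv ℝ g) (x, t) (1, 0)) x := curve_fst _ hfd x t
      have := (ContinuousLinearMap.apply ℝ A ((0, 1) : ℝ × ℝ)).hasFDerivAt.comp_hasDerivAt x h2'
      exact this
    have h2'' : HasDerivAt (fun u => -(ω₁ (u, t)) * g (u, t))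
        (fderiv ℝ (fderiv ℝ g) (x, t) (1, 0) (0, 1)) x := by
      have : (fun u => fderiv ℝ g (u, t) (0, 1)) = fun u => -(ω₁ (u, t)) * g (u, t) :=
        funext fun u => hgt' u t
      rwa [this] at h2
    have h3 : HasDerivAt (fun u => -(ω₁ (u, t)) * g (u, t))
        (-(deriv (fun u => ω₁ (u, t)) x) * g (x, t) + -(ω₁ (x, t)) * w t) x := by
      have hω : HasDerivAt (fun u => ω₁ (u, t)) (deriv (fun u => ω₁ (u, t)) x) x := by
        have := curve_fst ω₁ hω₁d x t
        exact this.deriv ▸ this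
      have hgx : HasDerivAt (fun u => g (u, t)) (w t) x := curve_fst g hgd x t
      exact hω.neg.mul hgx
    have := h2''.unique h3
    rw [← hsym] at this
    exact this ▸ h1'
  -- derivative of g in t
  have hgx : ∀ t : ℝ, HasDerivAt (fun s => g (x, s)) (-(ω₁ (x, t)) * g (x, t)) t := fun t =>
    hgt' x t ▸ curve_snd g hgd x t
  -- u and its derivative
  set u : ℝ → A := fun t => ω₀ (x, t) * g (x, t) + w t with hu
  have hud : ∀ t : ℝ, HasDerivAt u (-(ω₁ (x, t)) * u t) t := by
    intro t
    have hω : HasDerivAt (fun s => ω₀ (x, s)) (deriv (fun s => ω₀ (x, s)) t) t := by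
      have := curve_snd ω₀ hω₀d x t
      exact this.deriv ▸ this
    have h := (hω.mul (hgx t)).add (hwd t)
    have hfl := hflat x t
    have heq : deriv (fun s => ω₀ (x, s)) t * g (x, t) + ω₀ (x, t) * (-(ω₁ (x, t)) * g (x, t))
        + (-(deriv (fun u => ω₁ (u, t)) x) * g (x, t) + -(ω₁ (x, t)) * w t)
        = -(ω₁ (x, t)) * u t := by
      have : deriv (fun s => ω₀ (x, s)) t
          = deriv (fun u => ω₁ (u, t)) x - ω₁ (x, t) * ω₀ (x, t) + ω₀ (x, t) * ω₁ (x, t) := by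
        rw [← sub_eq_zero, ← hfl]; abel
      rw [this, hu]
      noncomm_ring
    exact heq ▸ h
  -- derivative of the inverse
  have hinv : ∀ t : ℝ, HasDerivAt (fun s => Ring.inverse (g (x, s)))
      (Ring.inverse (g (x, t)) * ω₁ (x, t)) t := by
    intro t
    have hiu : Ring.inverse (g (x, t)) = ↑(hgu (x, t)).unit⁻¹ :=
      Ring.inverse_of_isUnit (hgu (x, t))
    have hF : HasFDerivAt Ring.inverse
        (-ContinuousLinearMap.mulLeftRight ℝ A (Ring.inverse (g (x, t)))
          (Ring.inverse (g (x, t)))) (g (x, t)) := by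
      rw [hiu]
      have hF0 := hasFDerivAt_ringInverse (𝕜 := ℝ) (hgu (x, t)).unit
      rwa [(hgu (x, t)).unit_spec] at hF0
    have hcomp := hF.comp_hasDerivAt t (hgx t)
    have hgi : g (x, t) * Ring.inverse (g (x, t)) = 1 := Ring.mul_inverse_cancel _ (hgu (x, t))
    have : HasDerivAt (Ring.inverse ∘ fun s => g (x, s))
        (Ring.inverse (g (x, t)) * ω₁ (x, t)) t := by
      convert hcomp using 1
      case e'_4 => rfl
      simp only [ContinuousLinearMap.neg_apply, ContinuousLinearMap.mulLeftRight_apply,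
        neg_mul, mul_neg, neg_neg, mul_assoc, hgi, mul_one]
    exact this
  -- v constant
  set v : ℝ → A := fun t => Ring.inverse (g (x, t)) * u t with hv
  have hvd : ∀ t : ℝ, HasDerivAt v 0 t := by
    intro t
    have := (hinv t).mul (hud t)
    have hz : Ring.inverse (g (x, t)) * ω₁ (x, t) * u t
        + Ring.inverse (g (x, t)) * (-(ω₁ (x, t)) * u t) = 0 := by noncomm_ring
    exact hz ▸ this
  have hconst : v 1 = v 0 :=
    is_const_of_deriv_eq_zero (fun t => (hvd t).differentiableAt)
      (fun t => (hvd t).deriv) 1 0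
  -- compute v 0
  have hw0 : w 0 = 0 := by
    rw [← hw_eq 0]
    have : (fun u : ℝ => g (u, 0)) = fun _ => (1 : A) := funext hg0
    rw [this, deriv_const]
  have hv0 : v 0 = ω₀ (x, 0) := by
    simp [hv, hu, hw0, hg0 x]
  -- conclude
  have key : Ring.inverse (g (x, 1)) * (ω₀ (x, 1) * g (x, 1) + deriv (fun u => g (u, 1)) x)
      = ω₀ (x, 0) := by
    rw [hw_eq 1]; exact hconst.trans hv0
  have hgi : g (x, 1) * Ring.inverse (g (x, 1)) = 1 := Ring.mul_inverse_cancel _ (hgu (x, 1))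
  have key2 : ω₀ (x, 1) * g (x, 1) + deriv (fun u => g (u, 1)) x = g (x, 1) * ω₀ (x, 0) := by
    have h := congrArg (fun z => g (x, 1) * z) key
    simpa only [← mul_assoc, hgi, one_mul] using h
  rw [← key2, add_mul, mul_assoc (ω₀ (x, 1)), hgi, mul_one, add_sub_cancel_right]
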